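/- Two words α, β ∈ FM(Z) (Y-sequences) are Peiffer equivalent if and only if σ(α) ~_𝔘 σ(β) in Υ. -/

import Mathlib

universe u

namespace Wh

variable {X : Type u}

/-- The set of symbols `(ᵘr)^ε` for a presentation with relators `rels`:
`u` is a word of the free group, `r` a relator and `eps` the sign (`true` for `+1`). -/
structure Sym (X : Type u) (rels : Set (FreeGroup X)) where
  u : FreeGroup X
  r : rels
  eps : Bool

variable {rels : Set (FreeGroup X)}

/-- The formal inverse `(ᵘr)^{-ε}` of a symbol `(ᵘr)^ε`. -/
def Sym.symInv (a : Sym X rels) : Sym X rels := ⟨a.u, a.r, !a.eps⟩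

/-- `θ((ᵘr)^ε) = u r^ε u⁻¹`. -/
def Sym.theta (a : Sym X rels) : FreeGroup X :=
  a.u * (if a.eps then (a.r : FreeGroup X) else (a.r : FreeGroup X)⁻¹) * a.u⁻¹

/-- The conjugate `ᵛ((ᵘr)^ε) = (^{vu}r)^ε`. -/
def Sym.conj (v : FreeGroup X) (a : Sym X rels) : Sym X rels := ⟨v * a.u, a.r, a.eps⟩

/-- The defining relations of the monoid `Υ` : `a ⬝ b = (^{θ(a)}b) ⬝ a`. -/
def upsRel (rels : Set (FreeGroup X)) :
    FreeMonoid (Sym X rels) → FreeMonoid (Sym X rels) → Prop := fun x y =>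
  ∃ a b : Sym X rels, x = FreeMonoid.of a * FreeMonoid.of b ∧
    y = FreeMonoid.of (Sym.conj (Sym.theta a) b) * FreeMonoid.of a

/-- The congruence on the free monoid on `Z` generated by the defining relations of `Υ`. -/
def upsCon (rels : Set (FreeGroup X)) : Con (FreeMonoid (Sym X rels)) := conGen (upsRel rels)

/-- The monoid `Υ` presented on `Z` by the relations `a ⬝ b = (^{θ(a)}b) ⬝ a`. -/
abbrev Ups (rels : Set (FreeGroup X)) := (upsCon rels).Quotient

/-- The canonical epimorphism `σ : FM(Z) → Υ`. -/
def sigma (rels : Set (FreeGroup X)) : FreeMonoid (Sym X rels) →* Ups rels := (upsCon rels).mk'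

/-- The submonoid `𝔘` of `Υ` generated by the elements `σ(a)σ(a⁻¹)`, `a ∈ Z`. -/
def UU (rels : Set (FreeGroup X)) : Submonoid (Ups rels) :=
  Submonoid.closure
    {x | ∃ a : Sym X rels, x = sigma rels (FreeMonoid.of a * FreeMonoid.of a.symInv)}

/-- The monoid homomorphism `θ̄ : Υ → F` induced by `θ`. -/
def thetaBar (rels : Set (FreeGroup X)) : Ups rels →* FreeGroup X :=
  (upsCon rels).lift (FreeMonoid.lift Sym.theta) (by
    refine Con.conGen_le.2 fun x y h => ?_
    obtain ⟨a, b, rfl, rfl⟩ := h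
    simp only [Con.ker_rel, map_mul, FreeMonoid.lift_eval_of]
    simp only [Sym.theta, Sym.conj]
    group)

/-- The relators of the group `𝒢(Υ)` : `a ⬝ b ⬝ ι((^{θ(a)}b) ⬝ a)`. -/
def grels (rels : Set (FreeGroup X)) : Set (FreeGroup (Sym X rels)) :=
  {x | ∃ a b : Sym X rels, x = FreeGroup.of a * FreeGroup.of b *
      (FreeGroup.of (Sym.conj (Sym.theta a) b) * FreeGroup.of a)⁻¹}

/-- The universal enveloping group `𝒢(Υ)`. -/
abbrev GUps (rels : Set (FreeGroup X)) := PresentedGroup (grels rels)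

/-- The canonical monoid homomorphism `μ : Υ → 𝒢(Υ)`. -/
def mu (rels : Set (FreeGroup X)) : Ups rels →* GUps rels :=
  (upsCon rels).lift (FreeMonoid.lift fun a => (PresentedGroup.of a : GUps rels)) (by
    refine Con.conGen_le.2 fun x y h => ?_
    obtain ⟨a, b, rfl, rfl⟩ := h
    simp only [Con.ker_rel, map_mul, FreeMonoid.lift_eval_of]
    have h2 : (QuotientGroup.mk (FreeGroup.of a * FreeGroup.of b *
        (FreeGroup.of (Sym.conj (Sym.theta a) b) * FreeGroup.of a)⁻¹) : GUps rels) = 1 :=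
      (QuotientGroup.eq_one_iff _).2 (Subgroup.subset_normalClosure ⟨a, b, rfl⟩)
    rw [QuotientGroup.mk_mul, QuotientGroup.mk_inv, QuotientGroup.mk_mul,
      QuotientGroup.mk_mul, mul_inv_eq_one] at h2
    exact h2)

/-- The subgroup `𝔘̂` of `𝒢(Υ)` generated by `μ(𝔘)`. -/
def UUhat (rels : Set (FreeGroup X)) : Subgroup (GUps rels) :=
  Subgroup.closure (mu rels '' (UU rels : Set (Ups rels)))

/-- The group homomorphism `θ̃ : 𝒢(Υ) → F` induced by `θ`. -/
def thetaTilde (rels : Set (FreeGroup X)) : GUps rels →* FreeGroup X :=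
  PresentedGroup.toGroup (f := Sym.theta) (by
    rintro x ⟨a, b, rfl⟩
    simp only [map_mul, map_inv, FreeGroup.lift_apply_of]
    simp only [Sym.theta, Sym.conj]
    group)

/-- Peiffer equivalence `~_𝔘` on `Υ` : the equivalence relation generated by the pairs
`(x, x ⬝ σ(a)σ(a⁻¹))`. -/
def peifferEquiv (rels : Set (FreeGroup X)) : Ups rels → Ups rels → Prop :=
  Relation.EqvGen fun x y => ∃ a : Sym X rels,
    y = x * sigma rels (FreeMonoid.of a * FreeMonoid.of a.symInv)

/-- The weak dominion of a submonoid `U` of a monoid `S`. -/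
def WDom (S : Type u) [Monoid S] (U : Submonoid S) : Set S :=
  {d | ∀ (G : Type u) [Group G] (f g : S →* G), (∀ u ∈ U, f u = g u) → f d = g d}

/-- The `F`-action on `𝒢(Υ)` determined by `ʷ(μσ(a)) = μσ(ʷa)`. -/
def actF (rels : Set (FreeGroup X)) (w : FreeGroup X) : GUps rels →* GUps rels :=
  PresentedGroup.toGroup (f := fun a => (PresentedGroup.of (Sym.conj w a) : GUps rels)) (by
    rintro x ⟨a, b, rfl⟩
    simp only [map_mul, map_inv, FreeGroup.lift_apply_of]
    have key : Sym.conj w (Sym.conj (Sym.theta a) b) =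
        Sym.conj (Sym.theta (Sym.conj w a)) (Sym.conj w b) := by
      unfold Sym.conj Sym.theta; split <;> simp [mul_assoc]
    rw [key]
    have h2 : (QuotientGroup.mk (FreeGroup.of (Sym.conj w a) * FreeGroup.of (Sym.conj w b) *
        (FreeGroup.of (Sym.conj (Sym.theta (Sym.conj w a)) (Sym.conj w b)) *
          FreeGroup.of (Sym.conj w a))⁻¹) : GUps rels) = 1 :=
      (QuotientGroup.eq_one_iff _).2 (Subgroup.subset_normalClosure ⟨_, _, rfl⟩)
    rw [QuotientGroup.mk_mul, QuotientGroup.mk_inv, QuotientGroup.mk_mul,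
      QuotientGroup.mk_mul] at h2
    exact h2)


/-- One elementary Peiffer operation on `Y`-sequences (words over `Z`): an elementary
Peiffer exchange in either direction, or a Peiffer deletion. -/
def peifferStep (rels : Set (FreeGroup X)) :
    FreeMonoid (Sym X rels) → FreeMonoid (Sym X rels) → Prop := fun x y =>
  (∃ (w₁ w₂ : FreeMonoid (Sym X rels)) (a b : Sym X rels),
      x = w₁ * FreeMonoid.of a * FreeMonoid.of b * w₂ ∧
      y = w₁ * FreeMonoid.of (Sym.conj (Sym.theta a) b) * FreeMonoid.of a * w₂) ∨
  (∃ (w₁ w₂ : FreeMonoid (Sym X rels)) (a b : Sym X rels),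
      x = w₁ * FreeMonoid.of a * FreeMonoid.of b * w₂ ∧
      y = w₁ * FreeMonoid.of b * FreeMonoid.of (Sym.conj (Sym.theta b)⁻¹ a) * w₂) ∨
  (∃ (w₁ w₂ : FreeMonoid (Sym X rels)) (a : Sym X rels),
      x = w₁ * FreeMonoid.of a * FreeMonoid.of a.symInv * w₂ ∧ y = w₁ * w₂)

/-- Peiffer equivalence of `Y`-sequences: the equivalence relation on `FM(Z)` generated
by the elementary Peiffer operations (exchanges, deletions and insertions). -/
def wordPeifferEquiv (rels : Set (FreeGroup X)) :
    FreeMonoid (Sym X rels) → FreeMonoid (Sym X rels) → Prop :=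
  Relation.EqvGen (peifferStep rels)


lemma theta_mul_theta_symInv (a : Sym X rels) : a.theta * a.symInv.theta = 1 := by
  cases a with
  | mk u r eps => cases eps <;> simp [Sym.theta, Sym.symInv] <;> group

lemma conj_theta_symInv (a b : Sym X rels) :
    Sym.conj a.theta (Sym.conj a.symInv.theta b) = b := by
  cases b; simp [Sym.conj, ← mul_assoc, theta_mul_theta_symInv]

lemma conj_conj_inv (v : FreeGroup X) (a : Sym X rels) :
    Sym.conj v (Sym.conj v⁻¹ a) = a := by
  cases a; simp [Sym.conj, ← mul_assoc]

lemma upsCon_exchange (a b : Sym X rels) :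
    upsCon rels (FreeMonoid.of a * FreeMonoid.of b)
      (FreeMonoid.of (Sym.conj a.theta b) * FreeMonoid.of a) :=
  ConGen.Rel.of _ _ ⟨a, b, rfl, rfl⟩

lemma upsCon_pair_comm (a b : Sym X rels) :
    upsCon rels (FreeMonoid.of a * FreeMonoid.of a.symInv * FreeMonoid.of b)
      (FreeMonoid.of b * (FreeMonoid.of a * FreeMonoid.of a.symInv)) := by
  have h1 : upsCon rels (FreeMonoid.of a * FreeMonoid.of a.symInv * FreeMonoid.of b)
      (FreeMonoid.of a * (FreeMonoid.of (Sym.conj a.symInv.theta b) * FreeMonoid.of a.symInv)) := by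
    rw [mul_assoc]
    exact (upsCon rels).mul ((upsCon rels).refl _) (upsCon_exchange a.symInv b)
  have h2 : upsCon rels
      (FreeMonoid.of a * FreeMonoid.of (Sym.conj a.symInv.theta b) * FreeMonoid.of a.symInv)
      (FreeMonoid.of b * (FreeMonoid.of a * FreeMonoid.of a.symInv)) := by
    have := (upsCon rels).mul (upsCon_exchange a (Sym.conj a.symInv.theta b))
      ((upsCon rels).refl (FreeMonoid.of a.symInv))
    rw [conj_theta_symInv] at this
    rw [mul_assoc (FreeMonoid.of b)] at this
    exact this
  rw [← mul_assoc] at h1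
  exact (upsCon rels).trans h1 h2

lemma upsCon_comm (a : Sym X rels) (w : FreeMonoid (Sym X rels)) :
    upsCon rels (FreeMonoid.of a * FreeMonoid.of a.symInv * w)
      (w * (FreeMonoid.of a * FreeMonoid.of a.symInv)) := by
  induction w using FreeMonoid.inductionOn' with
  | one => rw [mul_one, one_mul]; exact (upsCon rels).refl _
  | of_mul b w ih =>
    have h1 : upsCon rels
        (FreeMonoid.of a * FreeMonoid.of a.symInv * FreeMonoid.of b * w)
        ((FreeMonoid.of b * (FreeMonoid.of a * FreeMonoid.of a.symInv)) * w) :=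
      (upsCon rels).mul (upsCon_pair_comm a b) ((upsCon rels).refl w)
    rw [mul_assoc (FreeMonoid.of a * FreeMonoid.of a.symInv) (FreeMonoid.of b) w,
      mul_assoc (FreeMonoid.of b) (FreeMonoid.of a * FreeMonoid.of a.symInv) w] at h1
    have h2 : upsCon rels
        (FreeMonoid.of b * (FreeMonoid.of a * FreeMonoid.of a.symInv * w))
        (FreeMonoid.of b * (w * (FreeMonoid.of a * FreeMonoid.of a.symInv))) :=
      (upsCon rels).mul ((upsCon rels).refl _) ih
    rw [← mul_assoc (FreeMonoid.of b) w (FreeMonoid.of a * FreeMonoid.of a.symInv)] at h2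
    exact (upsCon rels).trans h1 h2

lemma sigma_eq_of_upsCon {x y : FreeMonoid (Sym X rels)} (h : upsCon rels x y) :
    sigma rels x = sigma rels y := (Con.eq (upsCon rels)).mpr h

lemma upsCon_of_sigma_eq {x y : FreeMonoid (Sym X rels)} (h : sigma rels x = sigma rels y) :
    upsCon rels x y := (Con.eq (upsCon rels)).mp h

/-- `wordPeifferEquiv` is a congruence. -/
lemma step_mul (c d : FreeMonoid (Sym X rels)) {x y : FreeMonoid (Sym X rels)}
    (h : peifferStep rels x y) : peifferStep rels (c * x * d) (c * y * d) := by
  rcases h with ⟨w₁, w₂, a, b, rfl, rfl⟩ | ⟨w₁, w₂, a, b, rfl, rfl⟩ | ⟨w₁, w₂, a, rfl, rfl⟩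
  · exact Or.inl ⟨c * w₁, w₂ * d, a, b, by simp [mul_assoc], by simp [mul_assoc]⟩
  · exact Or.inr (Or.inl ⟨c * w₁, w₂ * d, a, b, by simp [mul_assoc], by simp [mul_assoc]⟩)
  · exact Or.inr (Or.inr ⟨c * w₁, w₂ * d, a, by simp [mul_assoc], by simp [mul_assoc]⟩)

lemma wpe_mul (c d : FreeMonoid (Sym X rels)) {x y : FreeMonoid (Sym X rels)}
    (h : wordPeifferEquiv rels x y) : wordPeifferEquiv rels (c * x * d) (c * y * d) := by
  induction h with
  | rel x y h => exact Relation.EqvGen.rel _ _ (step_mul c d h)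
  | refl x => exact Relation.EqvGen.refl _
  | symm x y _ ih => exact Relation.EqvGen.symm _ _ ih
  | trans x y z _ _ ih1 ih2 => exact Relation.EqvGen.trans _ _ _ ih1 ih2

def wpCon (rels : Set (FreeGroup X)) : Con (FreeMonoid (Sym X rels)) where
  r := wordPeifferEquiv rels
  iseqv := ⟨fun x => Relation.EqvGen.refl x, Relation.EqvGen.symm _ _,
    Relation.EqvGen.trans _ _ _⟩
  mul' := by
    intro w x y z h1 h2
    have ha : wordPeifferEquiv rels (w * y) (x * y) := by
      have := wpe_mul 1 y h1; simpa using this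
    have hb : wordPeifferEquiv rels (x * y) (x * z) := by
      have := wpe_mul x 1 h2; simpa using this
    exact Relation.EqvGen.trans _ _ _ ha hb

lemma wpe_of_upsCon {x y : FreeMonoid (Sym X rels)} (h : upsCon rels x y) :
    wordPeifferEquiv rels x y := by
  have hle : upsCon rels ≤ wpCon rels := by
    refine Con.conGen_le.2 ?_
    rintro x y ⟨a, b, rfl, rfl⟩
    exact Relation.EqvGen.rel _ _ (Or.inl ⟨1, 1, a, b, by simp, by simp⟩)
  exact hle h

lemma step_peifferEquiv {x y : FreeMonoid (Sym X rels)} (h : peifferStep rels x y) :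
    peifferEquiv rels (sigma rels x) (sigma rels y) := by
  rcases h with ⟨w₁, w₂, a, b, rfl, rfl⟩ | ⟨w₁, w₂, a, b, rfl, rfl⟩ | ⟨w₁, w₂, a, rfl, rfl⟩
  · have h : upsCon rels (w₁ * FreeMonoid.of a * FreeMonoid.of b * w₂)
        (w₁ * FreeMonoid.of (Sym.conj a.theta b) * FreeMonoid.of a * w₂) := by
      rw [mul_assoc w₁ (FreeMonoid.of a), mul_assoc w₁ (FreeMonoid.of _)]
      exact (upsCon rels).mul ((upsCon rels).mul ((upsCon rels).refl w₁)
        (upsCon_exchange a b)) ((upsCon rels).refl w₂)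
    rw [sigma_eq_of_upsCon h]
    exact Relation.EqvGen.refl _
  · have h : upsCon rels (w₁ * FreeMonoid.of b * FreeMonoid.of (Sym.conj b.theta⁻¹ a) * w₂)
        (w₁ * FreeMonoid.of a * FreeMonoid.of b * w₂) := by
      have h0 := upsCon_exchange b (Sym.conj b.theta⁻¹ a)
      rw [conj_conj_inv] at h0
      rw [mul_assoc w₁ (FreeMonoid.of a), mul_assoc w₁ (FreeMonoid.of b)]
      exact (upsCon rels).mul ((upsCon rels).mul ((upsCon rels).refl w₁) h0)
        ((upsCon rels).refl w₂)
    rw [← sigma_eq_of_upsCon h]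
    exact Relation.EqvGen.refl _
  · have h : upsCon rels (w₁ * FreeMonoid.of a * FreeMonoid.of a.symInv * w₂)
        (w₁ * w₂ * (FreeMonoid.of a * FreeMonoid.of a.symInv)) := by
      have h0 := (upsCon rels).mul ((upsCon rels).refl w₁) (upsCon_comm a w₂)
      rw [← mul_assoc, ← mul_assoc, ← mul_assoc w₁ w₂] at h0
      exact h0
    have hσ : sigma rels (w₁ * FreeMonoid.of a * FreeMonoid.of a.symInv * w₂) =
        sigma rels (w₁ * w₂) * sigma rels (FreeMonoid.of a * FreeMonoid.of a.symInv) := by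
      rw [sigma_eq_of_upsCon h, map_mul]
    exact Relation.EqvGen.symm _ _ (Relation.EqvGen.rel _ _ ⟨a, hσ⟩)


theorem wordPeifferEquiv_iff' (rels : Set (FreeGroup X))
    (α β : FreeMonoid (Sym X rels)) :
    wordPeifferEquiv rels α β ↔ peifferEquiv rels (sigma rels α) (sigma rels β) := by
  constructor
  · intro h
    induction h with
    | rel x y h => exact step_peifferEquiv h
    | refl x => exact Relation.EqvGen.refl _
    | symm x y _ ih => exact Relation.EqvGen.symm _ _ ih
    | trans x y z _ _ ih1 ih2 => exact Relation.EqvGen.trans _ _ _ ih1 ih2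
  · intro h
    have key : ∀ x y : Ups rels, peifferEquiv rels x y →
        ∀ α β : FreeMonoid (Sym X rels), sigma rels α = x → sigma rels β = y →
          wordPeifferEquiv rels α β := by
      intro x y h
      induction h with
      | rel x y hxy =>
        intro α β hα hβ
        obtain ⟨a, rfl⟩ := hxy
        have hσ : sigma rels β =
            sigma rels (α * (FreeMonoid.of a * FreeMonoid.of a.symInv)) := by
          rw [hβ, ← hα]; simp [map_mul]
        have h1 : wordPeifferEquiv rels β (α * (FreeMonoid.of a * FreeMonoid.of a.symInv)) :=
          wpe_of_upsCon (upsCon_of_sigma_eq hσ)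
        have h2 : wordPeifferEquiv rels (α * (FreeMonoid.of a * FreeMonoid.of a.symInv)) α :=
          Relation.EqvGen.rel _ _ (Or.inr (Or.inr ⟨α, 1, a, by simp [mul_assoc], by simp⟩))
        exact Relation.EqvGen.symm _ _ (Relation.EqvGen.trans _ _ _ h1 h2)
      | refl x =>
        intro α β hα hβ
        exact wpe_of_upsCon (upsCon_of_sigma_eq (hα.trans hβ.symm))
      | symm x y _ ih =>
        intro α β hα hβ
        exact Relation.EqvGen.symm _ _ (ih β α hβ hα)
      | trans x y z _ _ ih1 ih2 =>
        intro α β hα hβ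
        obtain ⟨γ, hγ⟩ := Con.mk'_surjective (c := upsCon rels) y
        exact Relation.EqvGen.trans _ _ _ (ih1 α γ hα hγ) (ih2 γ β hγ hβ)
    exact key _ _ h α β rfl rfl


/-- Two `Y`-sequences `α, β` are Peiffer equivalent in the usual sense if and only if
`σ(α) ~_𝔘 σ(β)` in `Υ`. -/
theorem wordPeifferEquiv_iff (rels : Set (FreeGroup X))
    (α β : FreeMonoid (Sym X rels)) :
    wordPeifferEquiv rels α β ↔ peifferEquiv rels (sigma rels α) (sigma rels β) := by
  exact wordPeifferEquiv_iff' rels α β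

end Wh
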